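/- Let R be a commutative ring, Ã ∈ R^{l1×l0}, Ñ ∈ R^{m1×m0}, L̃ ∈ R^{l1'×l0'} matrices, and φ ∈ R^{l0×m0} with ⟨Ãφ⟩ ≤ ⟨Ñ⟩, inducing φ̄ : coker(Ã) → coker(Ñ). Let T_M be the stacked matrix (Ã ⊗ I_{l0'} over I_{l0} ⊗ L̃) and T_N the stacked matrix (Ñ ⊗ I_{l0'} over I_{m0} ⊗ L̃). Then ⟨T_M (φ ⊗ I_{l0'})⟩ ≤ ⟨T_N⟩, so right multiplication by the Kronecker product φ ⊗ I_{l0'} induces an R-linear map coker(T_M) → coker(T_N), and under the isomorphisms coker(T_M) ≅ coker(Ã) ⊗_R coker(L̃) and coker(T_N) ≅ coker(Ñ) ⊗_R coker(L̃) this induced map equals φ̄ ⊗ id_{coker(L̃)}. -/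

import Mathlib

open Matrix

section Preamble

variable {R : Type*} [Ring R]

/-- `⟨A⟩`: the left `R`-submodule of row vectors `R^{1×q}` generated by the rows
of the matrix `A`. -/
def rowSpan {m : Type*} {q : ℕ} (A : Matrix m (Fin q) R) : Submodule R (Fin q → R) :=
  Submodule.span R (Set.range A)

theorem rowSpan_le_iff {m : Type*} {q : ℕ} {A : Matrix m (Fin q) R}
    {N : Submodule R (Fin q → R)} : rowSpan A ≤ N ↔ ∀ i, A i ∈ N := by
  simp only [rowSpan, Submodule.span_le]
  exact Set.range_subset_iff

/-- A matrix `φ` with `⟨Aφ⟩ ≤ ⟨B⟩` induces an `R`-linear map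
`coker A → coker B`, `x + ⟨A⟩ ↦ xφ + ⟨B⟩`. -/
def inducedMap {m m' : Type*} {q q' : ℕ} (A : Matrix m (Fin q) R) (B : Matrix m' (Fin q') R)
    (φ : Matrix (Fin q) (Fin q') R) (h : rowSpan (A * φ) ≤ rowSpan B) :
    ((Fin q → R) ⧸ rowSpan A) →ₗ[R] ((Fin q' → R) ⧸ rowSpan B) :=
  Submodule.mapQ _ _ φ.vecMulLinear (by
    rw [rowSpan, Submodule.span_le]
    rintro _ ⟨i, rfl⟩
    have hAi : φ.vecMulLinear (A i) = (A * φ) i := by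
      ext j
      simp [Matrix.vecMulLinear_apply, Matrix.mul_apply, Matrix.vecMul, dotProduct]
    have hmem := h (Submodule.subset_span ⟨i, rfl⟩)
    simp only [SetLike.mem_coe, Submodule.mem_comap, hAi]
    exact hmem)

end Preamble

/-- The row-major vectorization `row(A) ∈ R^{1×mn}` of a matrix `A ∈ R^{m×n}`:
`row(A)_{i·n+j} = A_{ij}` (`0`-indexed). -/
def rowVec {R : Type*} [Ring R] {m n : ℕ} (A : Matrix (Fin m) (Fin n) R) :
    Fin (m * n) → R :=
  fun k => A (finProdFinEquiv.symm k).1 (finProdFinEquiv.symm k).2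

/-- The Kronecker product `A ⊗ B := (a_{ij}B)`, reindexed so as to be indexed by
`Fin (m*p)` and `Fin (n*q)` in the row-major way. -/
def kron {R : Type*} [Ring R] {m n p q : ℕ} (A : Matrix (Fin m) (Fin n) R)
    (B : Matrix (Fin p) (Fin q) R) : Matrix (Fin (m * p)) (Fin (n * q)) R :=
  Matrix.reindex finProdFinEquiv finProdFinEquiv (Matrix.kroneckerMap (· * ·) A B)

/-- The row vector `x ⊗ y ∈ R^{1×ab}` corresponding to `x ∈ R^{1×a}`, `y ∈ R^{1×b}` under
the row-major identification `R^{1×a} ⊗ R^{1×b} ≅ R^{1×ab}`, `eᵢ ⊗ eⱼ ↦ e_{i·b+j}`. -/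
def tensorRow {R : Type*} [Ring R] {a b : ℕ} (x : Fin a → R) (y : Fin b → R) :
    Fin (a * b) → R :=
  fun k => x (finProdFinEquiv.symm k).1 * y (finProdFinEquiv.symm k).2


section Aux
variable {R : Type*} [CommRing R]

lemma divNat_finProdFinEquiv {a b : ℕ} (i : Fin a) (j : Fin b) :
    (finProdFinEquiv (i, j)).divNat = i := by
  have h := finProdFinEquiv.symm_apply_apply (i, j)
  rw [finProdFinEquiv_symm_apply, Prod.mk.injEq] at h
  exact h.1

lemma modNat_finProdFinEquiv {a b : ℕ} (i : Fin a) (j : Fin b) :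
    (finProdFinEquiv (i, j)).modNat = j := by
  have h := finProdFinEquiv.symm_apply_apply (i, j)
  rw [finProdFinEquiv_symm_apply, Prod.mk.injEq] at h
  exact h.2

lemma kron_row {m n p q : ℕ} (P : Matrix (Fin m) (Fin n) R) (Q : Matrix (Fin p) (Fin q) R)
    (i : Fin m) (j : Fin p) :
    kron P Q (finProdFinEquiv (i, j)) = tensorRow (P i) (Q j) := by
  funext k
  simp [kron, tensorRow, Matrix.kroneckerMap]

lemma tensorRow_single {a b : ℕ} (i : Fin a) (j : Fin b) :
    tensorRow (Pi.single i (1 : R)) (Pi.single j 1) = Pi.single (finProdFinEquiv (i, j)) 1 := by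
  funext k
  obtain ⟨⟨k1, k2⟩, rfl⟩ := finProdFinEquiv.surjective k
  simp only [tensorRow, Equiv.symm_apply_apply, Pi.single_apply,
    EmbeddingLike.apply_eq_iff_eq, Prod.mk.injEq]
  by_cases h1 : k1 = i <;> by_cases h2 : k2 = j <;> simp [h1, h2]

lemma vecMul_tensorRow {a b c d : ℕ} (x : Fin a → R) (y : Fin b → R)
    (P : Matrix (Fin a) (Fin c) R) (Q : Matrix (Fin b) (Fin d) R) :
    Matrix.vecMul (tensorRow x y) (kron P Q) = tensorRow (Matrix.vecMul x P) (Matrix.vecMul y Q) := by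
  funext k
  simp only [Matrix.vecMul, dotProduct, tensorRow, kron, Matrix.reindex_apply,
    Matrix.submatrix_apply, Matrix.kroneckerMap]
  rw [← finProdFinEquiv.sum_comp]
  rw [Fintype.sum_prod_type]
  rw [Finset.sum_mul_sum]
  congr 1
  funext i
  congr 1
  funext j
  simp only [Equiv.symm_apply_apply, Matrix.of_apply]
  ring

lemma tensorRow_expand_right {a b : ℕ} (x : Fin a → R) (y : Fin b → R) :
    tensorRow x y = ∑ j, y j • tensorRow x (Pi.single j 1) := by
  funext k
  obtain ⟨⟨i0, j0⟩, rfl⟩ := finProdFinEquiv.surjective k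
  simp only [tensorRow, Finset.sum_apply, Pi.smul_apply, smul_eq_mul, Equiv.symm_apply_apply]
  simp [Pi.single_apply, mul_comm, modNat_finProdFinEquiv]

lemma tensorRow_expand_left {a b : ℕ} (x : Fin a → R) (y : Fin b → R) :
    tensorRow x y = ∑ i, x i • tensorRow (Pi.single i 1) y := by
  funext k
  obtain ⟨⟨i0, j0⟩, rfl⟩ := finProdFinEquiv.surjective k
  simp only [tensorRow, Finset.sum_apply, Pi.smul_apply, smul_eq_mul, Equiv.symm_apply_apply]
  simp [Pi.single_apply, mul_comm, mul_assoc, divNat_finProdFinEquiv]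

lemma tensorRow_zero_left {a b : ℕ} (y : Fin b → R) : tensorRow (0 : Fin a → R) y = 0 := by
  funext k; simp [tensorRow]
lemma tensorRow_zero_right {a b : ℕ} (x : Fin a → R) : tensorRow x (0 : Fin b → R) = 0 := by
  funext k; simp [tensorRow]
lemma tensorRow_add_left {a b : ℕ} (x x' : Fin a → R) (y : Fin b → R) :
    tensorRow (x + x') y = tensorRow x y + tensorRow x' y := by
  funext k; simp [tensorRow, add_mul]
lemma tensorRow_add_right {a b : ℕ} (x : Fin a → R) (y y' : Fin b → R) :
    tensorRow x (y + y') = tensorRow x y + tensorRow x y' := by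
  funext k; simp [tensorRow, mul_add]
lemma tensorRow_smul_left {a b : ℕ} (c : R) (x : Fin a → R) (y : Fin b → R) :
    tensorRow (c • x) y = c • tensorRow x y := by
  funext k; simp [tensorRow, mul_assoc]
lemma tensorRow_smul_right {a b : ℕ} (c : R) (x : Fin a → R) (y : Fin b → R) :
    tensorRow x (c • y) = c • tensorRow x y := by
  funext k; simp [tensorRow]; ring

end Aux

section Aux2
variable {R : Type*} [CommRing R]

lemma one_row {n : ℕ} (j : Fin n) :
    (1 : Matrix (Fin n) (Fin n) R) j = Pi.single j 1 := by
  funext k; simp [Matrix.one_apply, Pi.single_apply, eq_comm]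

lemma row_mul {m n p : ℕ} (M : Matrix (Fin m) (Fin n) R) (C : Matrix (Fin n) (Fin p) R)
    (i : Fin m) : (M * C) i = Matrix.vecMul (M i) C := by
  funext k; simp [Matrix.mul_apply, Matrix.vecMul, dotProduct]

lemma fromRows_row_inl {m1 m2 n : ℕ} (X : Matrix (Fin m1) (Fin n) R)
    (Y : Matrix (Fin m2) (Fin n) R) (i : Fin m1) :
    Matrix.fromRows X Y (Sum.inl i) = X i := by
  funext k; simp

lemma fromRows_row_inr {m1 m2 n : ℕ} (X : Matrix (Fin m1) (Fin n) R)
    (Y : Matrix (Fin m2) (Fin n) R) (i : Fin m2) :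
    Matrix.fromRows X Y (Sum.inr i) = Y i := by
  funext k; simp

lemma tensorRow_mem_left {m1 m0 l1' l0' : ℕ}
    (N : Matrix (Fin m1) (Fin m0) R) (L : Matrix (Fin l1') (Fin l0') R)
    {x : Fin m0 → R} (hx : x ∈ rowSpan N) (y : Fin l0' → R) :
    tensorRow x y ∈ rowSpan (Matrix.fromRows (kron N (1 : Matrix (Fin l0') (Fin l0') R))
      (kron (1 : Matrix (Fin m0) (Fin m0) R) L)) := by
  induction hx using Submodule.span_induction with
  | mem x hx =>
    obtain ⟨r, rfl⟩ := hx
    rw [tensorRow_expand_right]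
    refine Submodule.sum_mem _ fun j _ => Submodule.smul_mem _ _ ?_
    have hrow : tensorRow (N r) (Pi.single j (1 : R))
        = Matrix.fromRows (kron N (1 : Matrix (Fin l0') (Fin l0') R))
          (kron (1 : Matrix (Fin m0) (Fin m0) R) L) (Sum.inl (finProdFinEquiv (r, j))) := by
      rw [fromRows_row_inl, kron_row, one_row]
    rw [hrow]
    exact Submodule.subset_span ⟨_, rfl⟩
  | zero => rw [tensorRow_zero_left]; exact Submodule.zero_mem _
  | add x x' _ _ ihx ihx' => rw [tensorRow_add_left]; exact Submodule.add_mem _ ihx ihx'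
  | smul c x _ ihx => rw [tensorRow_smul_left]; exact Submodule.smul_mem _ _ ihx

lemma tensorRow_mem_right {m1 m0 l1' l0' : ℕ}
    (N : Matrix (Fin m1) (Fin m0) R) (L : Matrix (Fin l1') (Fin l0') R)
    (x : Fin m0 → R) {y : Fin l0' → R} (hy : y ∈ rowSpan L) :
    tensorRow x y ∈ rowSpan (Matrix.fromRows (kron N (1 : Matrix (Fin l0') (Fin l0') R))
      (kron (1 : Matrix (Fin m0) (Fin m0) R) L)) := by
  induction hy using Submodule.span_induction with
  | mem y hy =>
    obtain ⟨r, rfl⟩ := hy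
    rw [tensorRow_expand_left]
    refine Submodule.sum_mem _ fun i _ => Submodule.smul_mem _ _ ?_
    have hrow : tensorRow (Pi.single i (1 : R)) (L r)
        = Matrix.fromRows (kron N (1 : Matrix (Fin l0') (Fin l0') R))
          (kron (1 : Matrix (Fin m0) (Fin m0) R) L) (Sum.inr (finProdFinEquiv (i, r))) := by
      rw [fromRows_row_inr, kron_row, one_row]
    rw [hrow]
    exact Submodule.subset_span ⟨_, rfl⟩
  | zero => rw [tensorRow_zero_right]; exact Submodule.zero_mem _
  | add y y' _ _ ihy ihy' => rw [tensorRow_add_right]; exact Submodule.add_mem _ ihy ihy'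
  | smul c y _ ihy => rw [tensorRow_smul_right]; exact Submodule.smul_mem _ _ ihy

end Aux2

lemma inducedMap_mk {R : Type*} [Ring R] {m m' : Type*} {q q' : ℕ}
    (A : Matrix m (Fin q) R) (B : Matrix m' (Fin q') R)
    (φ : Matrix (Fin q) (Fin q') R) (h : rowSpan (A * φ) ≤ rowSpan B) (x : Fin q → R) :
    inducedMap A B φ h (Submodule.Quotient.mk x) = Submodule.Quotient.mk (Matrix.vecMul x φ) := by
  unfold inducedMap
  rw [Submodule.mapQ_apply, Matrix.vecMulLinear_apply]

open TensorProduct in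
/-- Right multiplication by the Kronecker product `φ ⊗ I` induces a map
`coker T_M → coker T_N` which, under the canonical isomorphisms
`coker T_M ≅ coker Ã ⊗ coker L̃` and `coker T_N ≅ coker Ñ ⊗ coker L̃`, equals
`φ̄ ⊗ id`. -/
theorem statement_12 {R : Type*} [CommRing R] {l1 l0 m1 m0 l1' l0' : ℕ}
    (A : Matrix (Fin l1) (Fin l0) R) (N : Matrix (Fin m1) (Fin m0) R)
    (L : Matrix (Fin l1') (Fin l0') R)
    (φ : Matrix (Fin l0) (Fin m0) R) (h : rowSpan (A * φ) ≤ rowSpan N) :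
    let TM := Matrix.fromRows (kron A (1 : Matrix (Fin l0') (Fin l0') R))
      (kron (1 : Matrix (Fin l0) (Fin l0) R) L)
    let TN := Matrix.fromRows (kron N (1 : Matrix (Fin l0') (Fin l0') R))
      (kron (1 : Matrix (Fin m0) (Fin m0) R) L)
    ∃ h' : rowSpan (TM * kron φ (1 : Matrix (Fin l0') (Fin l0') R)) ≤ rowSpan TN,
      ∀ (eM : ((Fin (l0 * l0') → R) ⧸ rowSpan TM) ≃ₗ[R]
            ((((Fin l0 → R) ⧸ rowSpan A)) ⊗[R] ((Fin l0' → R) ⧸ rowSpan L)))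
        (eN : ((Fin (m0 * l0') → R) ⧸ rowSpan TN) ≃ₗ[R]
            ((((Fin m0 → R) ⧸ rowSpan N)) ⊗[R] ((Fin l0' → R) ⧸ rowSpan L))),
        (∀ (x : Fin l0 → R) (y : Fin l0' → R),
          eM (Submodule.Quotient.mk (tensorRow x y))
            = Submodule.Quotient.mk x ⊗ₜ[R] Submodule.Quotient.mk y) →
        (∀ (x : Fin m0 → R) (y : Fin l0' → R),
          eN (Submodule.Quotient.mk (tensorRow x y))
            = Submodule.Quotient.mk x ⊗ₜ[R] Submodule.Quotient.mk y) →
        ∀ z, eN (inducedMap TM TN (kron φ (1 : Matrix (Fin l0') (Fin l0') R)) h' z)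
          = TensorProduct.map (inducedMap A N φ h) LinearMap.id (eM z) := by
  intro TM TN
  have hTM : TM = Matrix.fromRows (kron A (1 : Matrix (Fin l0') (Fin l0') R))
      (kron (1 : Matrix (Fin l0) (Fin l0) R) L) := rfl
  have hTN : TN = Matrix.fromRows (kron N (1 : Matrix (Fin l0') (Fin l0') R))
      (kron (1 : Matrix (Fin m0) (Fin m0) R) L) := rfl
  have h' : rowSpan (TM * kron φ (1 : Matrix (Fin l0') (Fin l0') R)) ≤ rowSpan TN := by
    rw [rowSpan_le_iff]
    rintro (i | i)
    · obtain ⟨⟨i1, j⟩, rfl⟩ := finProdFinEquiv.surjective i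
      have hr : (TM * kron φ (1 : Matrix (Fin l0') (Fin l0') R))
            (Sum.inl (finProdFinEquiv (i1, j)))
          = tensorRow ((A * φ) i1) (Pi.single j 1) := by
        rw [hTM, Matrix.fromRows_mul, fromRows_row_inl, row_mul, kron_row, one_row,
          vecMul_tensorRow, Matrix.vecMul_one, ← row_mul]
      rw [hr, hTN]
      exact tensorRow_mem_left N L (rowSpan_le_iff.mp h i1) _
    · obtain ⟨⟨i1, j⟩, rfl⟩ := finProdFinEquiv.surjective i
      have hr : (TM * kron φ (1 : Matrix (Fin l0') (Fin l0') R))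
            (Sum.inr (finProdFinEquiv (i1, j)))
          = tensorRow (φ i1) (L j) := by
        rw [hTM, Matrix.fromRows_mul, fromRows_row_inr, row_mul, kron_row, one_row,
          vecMul_tensorRow, Matrix.vecMul_one, ← one_row, ← row_mul, Matrix.one_mul]
      rw [hr, hTN]
      exact tensorRow_mem_right N L _ (Submodule.subset_span ⟨j, rfl⟩)
  refine ⟨h', ?_⟩
  intro eM eN hM hN z
  obtain ⟨v, rfl⟩ := Submodule.Quotient.mk_surjective _ z
  have key : (eN.toLinearMap ∘ₗ inducedMap TM TN (kron φ (1 : Matrix (Fin l0') (Fin l0') R)) h'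
        ∘ₗ (rowSpan TM).mkQ)
      = ((TensorProduct.map (inducedMap A N φ h) LinearMap.id) ∘ₗ eM.toLinearMap
        ∘ₗ (rowSpan TM).mkQ) := by
    apply (Pi.basisFun R (Fin (l0 * l0'))).ext
    intro k
    obtain ⟨⟨i, j⟩, rfl⟩ := finProdFinEquiv.surjective k
    have hb : (Pi.basisFun R (Fin (l0 * l0'))) (finProdFinEquiv (i, j))
        = tensorRow (Pi.single i (1 : R)) (Pi.single j 1) := by
      rw [tensorRow_single]
      funext k
      simp [Pi.basisFun_apply, Pi.single_apply]
    simp only [LinearMap.comp_apply, Submodule.mkQ_apply, LinearEquiv.coe_coe, hb]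
    rw [inducedMap_mk, vecMul_tensorRow, Matrix.vecMul_one, hN, hM, TensorProduct.map_tmul,
      inducedMap_mk, LinearMap.id_apply]
  exact LinearMap.congr_fun key v
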